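/- Let G be a connected graph that is not an isolated vertex nor a single edge, and let π be a layout of G of width at most k. For each i, let X_i = mid(π_{≤ i−1}) ∪ endpoints(π(i)). Then |X_i| ≤ k + 1 for every 1 ≤ i ≤ m. -/

import Mathlib

variable {V : Type*} [Fintype V] [DecidableEq V]

/-- `Vs F` is the set of endpoints of edges in `F`. -/
def Vs (F : Finset (Sym2 V)) : Finset V :=
  Finset.univ.filter (fun v => ∃ e ∈ F, v ∈ e)

/-- The set of endpoints of a single edge. -/
def eset (e : Sym2 V) : Finset V := Finset.univ.filter (fun v => v ∈ e)

/-- `mids E F` is mid(F) = V(F) ∩ V(E \ F), relative to the edge set `E`. -/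
def mids (E F : Finset (Sym2 V)) : Finset V := Vs F ∩ Vs (E \ F)

/-- `dd E F` is d(F) = |mid(F)|, relative to the edge set `E`. -/
def dd (E F : Finset (Sym2 V)) : ℕ := (mids E F).card

/-- A layout of the edge set `E`: a duplicate-free list enumerating `E`
(equivalently, a bijection {1,…,m} → E). -/
def IsLayout (E : Finset (Sym2 V)) (L : List (Sym2 V)) : Prop :=
  L.Nodup ∧ L.toFinset = E

/-- The (partial) layout `L` has width at most `k` w.r.t. the edge set `E`:
every prefix `π_{≤ i}` satisfies d(π_{≤ i}) ≤ k. -/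
def WidthLE (E : Finset (Sym2 V)) (L : List (Sym2 V)) (k : ℕ) : Prop :=
  ∀ i, dd E (L.take i).toFinset ≤ k

/-- The linearwidth of the edge set `E`: the minimum width of a layout of `E`. -/
noncomputable def lw (E : Finset (Sym2 V)) : ℕ :=
  sInf {k | ∃ L, IsLayout E L ∧ WidthLE E L k}

/-- The number of edges of `S` incident to `u`. -/
def degIn (S : Finset (Sym2 V)) (u : V) : ℕ := (S.filter (fun e => u ∈ e)).card

/-- `X` is a path decomposition of `G`, given as a list of bags. -/
def IsPD (G : SimpleGraph V) (X : List (Finset V)) : Prop :=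
  (∀ v : V, ∃ B ∈ X, v ∈ B) ∧
  (∀ e ∈ G.edgeSet, ∃ B ∈ X, eset e ⊆ B) ∧
  (∀ v : V, ∀ i j l : ℕ, i ≤ j → j ≤ l → l < X.length →
    v ∈ X.getD i ∅ → v ∈ X.getD l ∅ → v ∈ X.getD j ∅)

/-- The pathwidth of `G`: the minimum over path decompositions of (max bag size) − 1. -/
noncomputable def pw (G : SimpleGraph V) : ℕ :=
  sInf {k | ∃ X, IsPD G X ∧ ∀ B ∈ X, B.card ≤ k + 1}

/-- The closure F* of `F` in `E`: all edges of `E` with both endpoints in `V(F)`. -/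
def cl (E F : Finset (Sym2 V)) : Finset (Sym2 V) := E.filter (fun e => eset e ⊆ Vs F)

/-- A partial layout `S` is `k`-extendable: it is a prefix of some layout
of `E` of width at most `k`. -/

lemma mem_Vs' {F : Finset (Sym2 V)} {v : V} : v ∈ Vs F ↔ ∃ e ∈ F, v ∈ e := by
  simp [Vs]

omit [Fintype V] [DecidableEq V] in
lemma walk_closed (G : SimpleGraph V) (S : Set V)
    (h : ∀ x ∈ S, ∀ y, G.Adj x y → y ∈ S) :
    ∀ {u w : V}, G.Walk u w → u ∈ S → w ∈ S := by
  intro u w p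
  induction p with
  | nil => exact id
  | cons h' p ih => intro hu; exact ih (h _ hu _ h')

def Extendable (E : Finset (Sym2 V)) (k : ℕ) (S : List (Sym2 V)) : Prop :=
  ∃ L, IsLayout E L ∧ WidthLE E L k ∧ S <+: L


/-- For connected G that is neither a single vertex nor a single edge
(equivalently, at least 3 vertices), every bag X_i = mid(π_{≤ i−1}) ∪ endpoints(π(i))
of a width-≤-k layout has size at most k + 1. -/
theorem stmt9 (G : SimpleGraph V) [DecidableRel G.Adj] (hG : G.Connected)
    (h3 : 3 ≤ Fintype.card V) (k : ℕ) (L : List (Sym2 V))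
    (hL : IsLayout G.edgeFinset L) (hw : WidthLE G.edgeFinset L k) :
    ∀ i : Fin L.length,
      (mids G.edgeFinset (L.take i).toFinset ∪ eset (L.get i)).card ≤ k + 1 := by
  intro i
  have hnd := hL.1
  have hEq := hL.2
  set E := G.edgeFinset with hE
  set e := L.get i with he
  set F := (L.take i).toFinset with hF
  set F' := (L.take ((i : ℕ) + 1)).toFinset with hF'
  have heL : e ∈ L := by rw [he, List.get_eq_getElem]; exact List.getElem_mem _
  have heE : e ∈ E := by rw [← hEq]; exact List.mem_toFinset.mpr heL
  have htake : L.take ((i : ℕ) + 1) = L.take i ++ [e] := by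
    rw [List.take_succ]
    congr 1
    rw [he]
    simp [List.getElem?_eq_getElem i.isLt, List.get_eq_getElem]
  have hF'eq : F' = insert e F := by
    rw [hF', htake, hF]
    ext f
    simp [or_comm]
  have heF : e ∉ F := by
    intro hmem
    rw [hF, List.mem_toFinset] at hmem
    have hnd' : (L.take ((i : ℕ) + 1)).Nodup := hnd.sublist (List.take_sublist _ _)
    rw [htake, List.nodup_append] at hnd'
    exact hnd'.2.2 e hmem e (by simp) rfl
  obtain ⟨u, v, huv⟩ : ∃ u v : V, s(u, v) = e := ⟨(Quot.out e).1, (Quot.out e).2, Quot.out_eq e⟩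
  have hAdj : G.Adj u v := by
    have := heE
    rw [hE, SimpleGraph.mem_edgeFinset, ← huv, SimpleGraph.mem_edgeSet] at this
    exact this
  have hne : u ≠ v := hAdj.ne
  have hes : eset e = {u, v} := by
    ext w
    simp [eset, ← huv, Sym2.mem_iff]
  have hue : u ∈ e := by rw [← huv]; exact Sym2.mem_mk_left _ _
  have hve : v ∈ e := by rw [← huv]; exact Sym2.mem_mk_right _ _
  have hcard : (mids E F ∪ eset e).card = (eset e \ mids E F).card + (mids E F).card := by
    rw [Finset.union_comm, ← Finset.card_sdiff_add_card]
  have hdF : (mids E F).card ≤ k := hw i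
  have hdF' : (mids E F').card ≤ k := hw ((i : ℕ) + 1)
  rw [hcard]
  by_cases hS : (eset e \ mids E F).card ≤ 1
  · omega
  · -- both endpoints of e are outside mid(F)
    have hcard2 : (eset e).card = 2 := by rw [hes]; rw [Finset.card_insert_of_notMem (by simp [hne])]; simp
    have h2 : eset e \ mids E F = eset e := by
      apply Finset.eq_of_subset_of_card_le (Finset.sdiff_subset)
      omega
    have humid : u ∉ mids E F := by
      have : u ∈ eset e \ mids E F := by rw [h2, hes]; simp
      exact (Finset.mem_sdiff.mp this).2
    have hvmid : v ∉ mids E F := by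
      have : v ∈ eset e \ mids E F := by rw [h2, hes]; simp
      exact (Finset.mem_sdiff.mp this).2
    have heEF : e ∈ E \ F := Finset.mem_sdiff.mpr ⟨heE, heF⟩
    have huF : u ∉ Vs F := fun hu =>
      humid (Finset.mem_inter.mpr ⟨hu, mem_Vs'.mpr ⟨e, heEF, hue⟩⟩)
    have hvF : v ∉ Vs F := fun hv =>
      hvmid (Finset.mem_inter.mpr ⟨hv, mem_Vs'.mpr ⟨e, heEF, hve⟩⟩)
    have hsub : mids E F ⊆ mids E F' := by
      intro w hwm
      obtain ⟨hw1, hw2⟩ := Finset.mem_inter.mp hwm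
      refine Finset.mem_inter.mpr ⟨?_, ?_⟩
      · obtain ⟨f, hf, hwf⟩ := mem_Vs'.mp hw1
        exact mem_Vs'.mpr ⟨f, by rw [hF'eq]; exact Finset.mem_insert_of_mem hf, hwf⟩
      · obtain ⟨f, hf, hwf⟩ := mem_Vs'.mp hw2
        have hfne : f ≠ e := by
          rintro rfl
          rw [← huv, Sym2.mem_iff] at hwf
          rcases hwf with rfl | rfl
          · exact huF hw1
          · exact hvF hw1
        refine mem_Vs'.mpr ⟨f, ?_, hwf⟩
        rw [Finset.mem_sdiff] at hf ⊢
        refine ⟨hf.1, ?_⟩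
        rw [hF'eq, Finset.mem_insert]
        push_neg
        exact ⟨hfne, hf.2⟩
    have hone : u ∈ mids E F' ∨ v ∈ mids E F' := by
      by_contra hcon
      push_neg at hcon
      have huVsF' : u ∈ Vs F' := mem_Vs'.mpr ⟨e, by rw [hF'eq]; exact Finset.mem_insert_self _ _, hue⟩
      have hvVsF' : v ∈ Vs F' := mem_Vs'.mpr ⟨e, by rw [hF'eq]; exact Finset.mem_insert_self _ _, hve⟩
      have keyu : ∀ f ∈ E, u ∈ f → f = e := by
        intro f hfE huf
        by_cases hfF' : f ∈ F'
        · rw [hF'eq, Finset.mem_insert] at hfF'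
          rcases hfF' with rfl | hfF
          · rfl
          · exact absurd (mem_Vs'.mpr ⟨f, hfF, huf⟩) huF
        · exact absurd (Finset.mem_inter.mpr ⟨huVsF',
            mem_Vs'.mpr ⟨f, Finset.mem_sdiff.mpr ⟨hfE, hfF'⟩, huf⟩⟩) hcon.1
      have keyv : ∀ f ∈ E, v ∈ f → f = e := by
        intro f hfE hvf
        by_cases hfF' : f ∈ F'
        · rw [hF'eq, Finset.mem_insert] at hfF'
          rcases hfF' with rfl | hfF
          · rfl
          · exact absurd (mem_Vs'.mpr ⟨f, hfF, hvf⟩) hvF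
        · exact absurd (Finset.mem_inter.mpr ⟨hvVsF',
            mem_Vs'.mpr ⟨f, Finset.mem_sdiff.mpr ⟨hfE, hfF'⟩, hvf⟩⟩) hcon.2
      have hclosed : ∀ x ∈ ({u, v} : Set V), ∀ y, G.Adj x y → y ∈ ({u, v} : Set V) := by
        intro x hx y hxy
        have hfE : s(x, y) ∈ E := by
          rw [hE, SimpleGraph.mem_edgeFinset, SimpleGraph.mem_edgeSet]; exact hxy
        rcases hx with rfl | rfl
        · have := keyu s(x, y) hfE (Sym2.mem_mk_left _ _)
          rw [← huv, Sym2.eq_iff] at this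
          rcases this with ⟨_, rfl⟩ | ⟨_, rfl⟩
          · exact Or.inr rfl
          · exact Or.inl rfl
        · have := keyv s(x, y) hfE (Sym2.mem_mk_left _ _)
          rw [← huv, Sym2.eq_iff] at this
          rcases this with ⟨h1, rfl⟩ | ⟨_, rfl⟩
          · exact absurd h1.symm hne
          · exact Or.inl rfl
      obtain ⟨w, hwuv⟩ : ∃ w : V, w ∉ ({u, v} : Finset V) := by
        by_contra hall
        push_neg at hall
        have : (Finset.univ : Finset V) ⊆ {u, v} := fun x _ => hall x
        have := Finset.card_le_card this
        have h2' : ({u, v} : Finset V).card ≤ 2 := Finset.card_le_two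
        rw [Finset.card_univ] at this
        omega
      obtain ⟨p⟩ := hG.preconnected u w
      have := walk_closed G ({u, v} : Set V) hclosed p (Or.inl rfl)
      simp only [Set.mem_insert_iff, Set.mem_singleton_iff] at this
      simp only [Finset.mem_insert, Finset.mem_singleton] at hwuv
      tauto
    have hkey : (mids E F).card + 1 ≤ k := by
      rcases hone with hu' | hv'
      · have : insert u (mids E F) ⊆ mids E F' := Finset.insert_subset hu' hsub
        have := Finset.card_le_card this
        rw [Finset.card_insert_of_notMem humid] at this
        omega
      · have : insert v (mids E F) ⊆ mids E F' := Finset.insert_subset hv' hsub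
        have := Finset.card_le_card this
        rw [Finset.card_insert_of_notMem hvmid] at this
        omega
    rw [h2, hcard2]
    omega
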